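/- For positive integers m and odd n, the treewidth of K_m □ K_n is at least m(n+1)/2 − 1. -/

import Mathlib

open SimpleGraph

/-- A tree decomposition of a simple graph `G`. -/
structure TreeDecomposition {V : Type*} (G : SimpleGraph V) where
  /-- index type of the decomposition tree -/
  ι : Type
  /-- the decomposition tree -/
  T : SimpleGraph ι
  isTree : T.IsTree
  /-- the bags of the decomposition -/
  bag : ι → Set V
  bag_finite : ∀ i, (bag i).Finite
  vert_cover : ∀ v : V, ∃ i, v ∈ bag i
  edge_cover : ∀ u v : V, G.Adj u v → ∃ i, u ∈ bag i ∧ v ∈ bag i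
  coherent : ∀ v : V, (T.induce {i | v ∈ bag i}).Connected

/-- The width of a tree decomposition: the maximal bag size minus one. -/
def TreeDecomposition.HasWidthAtMost {V : Type*} {G : SimpleGraph V}
    (d : TreeDecomposition G) (w : ℕ) : Prop :=
  ∀ i, (d.bag i).ncard ≤ w + 1

/-- The treewidth of a simple graph. -/
noncomputable def treewidth {V : Type*} (G : SimpleGraph V) : ℕ :=
  sInf {w | ∃ d : TreeDecomposition G, d.HasWidthAtMost w}

/-- A minor model (vertex model) of `G` inside `H`. -/
structure MinorMap {α β : Type*} (G : SimpleGraph α) (H : SimpleGraph β) where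
  /-- the chain (branch set) assigned to each vertex -/
  chain : α → Set β
  chain_nonempty : ∀ v, (chain v).Nonempty
  chain_connected : ∀ v, (H.induce (chain v)).Connected
  chain_disjoint : ∀ u v, u ≠ v → Disjoint (chain u) (chain v)
  chain_edge : ∀ u v, G.Adj u v → ∃ a ∈ chain u, ∃ b ∈ chain v, H.Adj a b

/-- `G` is a minor of `H`. -/
def IsMinorOf {α β : Type*} (G : SimpleGraph α) (H : SimpleGraph β) : Prop :=
  Nonempty (MinorMap G H)

/-- The Chimera graph `C_{N,M,L}`: an `N × M` grid of `K_{L,L}` bipartite blocks.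
A vertex is `((i, j), (side, k))` where `(i,j)` locates the block, `side = false`
for the left (vertical) side, `side = true` for the right (horizontal) side, and
`k` indexes the vertex within its side. -/
def chimera (N M L : ℕ) : SimpleGraph ((Fin N × Fin M) × Bool × Fin L) :=
  SimpleGraph.fromRel (fun a b =>
    -- intra-block edges of K_{L,L}
    (a.1 = b.1 ∧ a.2.1 = false ∧ b.2.1 = true) ∨
    -- vertical inter-block edges between left-side vertices
    (a.2.1 = false ∧ b.2.1 = false ∧ a.2.2 = b.2.2 ∧
      a.1.2 = b.1.2 ∧ (a.1.1 : ℕ) + 1 = b.1.1) ∨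
    -- horizontal inter-block edges between right-side vertices
    (a.2.1 = true ∧ b.2.1 = true ∧ a.2.2 = b.2.2 ∧
      a.1.1 = b.1.1 ∧ (a.1.2 : ℕ) + 1 = b.1.2))

section TreeHelly

variable {ι : Type*} [DecidableEq ι] {T : SimpleGraph ι}

/-- A set is walk-connected if any two of its members are joined by a walk inside it. -/
def WConn (T : SimpleGraph ι) (S : Set ι) : Prop :=
  ∀ a ∈ S, ∀ b ∈ S, ∃ p : T.Walk a b, ∀ y ∈ p.support, y ∈ S

/-- The geodesic between two vertices of a tree. -/
noncomputable def geo (hT : T.IsTree) (a b : ι) : T.Walk a b :=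
  ((Classical.choice (hT.isConnected.preconnected a b : Nonempty (T.Walk a b))).toPath : T.Path a b).val

lemma geo_isPath (hT : T.IsTree) (a b : ι) : (geo hT a b).IsPath :=
  ((Classical.choice (hT.isConnected.preconnected a b : Nonempty (T.Walk a b))).toPath).prop

lemma path_eq_geo (hT : T.IsTree) {a b : ι} (p : T.Walk a b) (hp : p.IsPath) :
    p = geo hT a b :=
  congrArg Subtype.val
    (hT.IsAcyclic.path_unique ⟨p, hp⟩ ⟨geo hT a b, geo_isPath hT a b⟩)

lemma geo_spec (hT : T.IsTree) {S : Set ι} (hS : WConn T S) {a b : ι}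
    (ha : a ∈ S) (hb : b ∈ S) : ∀ y ∈ (geo hT a b).support, y ∈ S := by
  obtain ⟨p, hp⟩ := hS a ha b hb
  intro y hy
  have hbp : p.bypass = geo hT a b := path_eq_geo hT _ p.bypass_isPath
  exact hp y (p.support_bypass_subset (hbp ▸ hy))

lemma wconn_inter (hT : T.IsTree) {S₁ S₂ : Set ι} (h₁ : WConn T S₁) (h₂ : WConn T S₂) :
    WConn T (S₁ ∩ S₂) := fun a ha b hb =>
  ⟨geo hT a b, fun y hy => ⟨geo_spec hT h₁ ha.1 hb.1 y hy, geo_spec hT h₂ ha.2 hb.2 y hy⟩⟩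

/-- Split a walk at the first vertex lying in a set containing the endpoint. -/
lemma exists_first_in_set {a b : ι} (p : T.Walk a b) (B : Set ι) (hb : b ∈ B) :
    ∃ (x : ι) (q : T.Walk a x) (r : T.Walk x b), x ∈ B ∧ q.append r = p ∧
      ∀ y ∈ q.support, y ∈ B → y = x := by
  induction p with
  | nil => exact ⟨_, Walk.nil, Walk.nil, hb, rfl, fun y hy _ => by simpa using hy⟩
  | @cons u v w huv p ih =>
    by_cases hu : u ∈ B
    · exact ⟨u, Walk.nil, Walk.cons huv p, hu, rfl, fun y hy _ => by simpa using hy⟩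
    · obtain ⟨x, q, r, hxB, hqr, hq⟩ := ih hb
      refine ⟨x, Walk.cons huv q, r, hxB, by rw [Walk.cons_append, hqr], ?_⟩
      intro y hy hyB
      rw [Walk.support_cons] at hy
      rcases List.mem_cons.mp hy with rfl | hy
      · exact absurd hyB hu
      · exact hq y hy hyB

lemma isPath_append_of_sep {a x c : ι} {q : T.Walk a x} {d : T.Walk x c}
    (hq : q.IsPath) (hd : d.IsPath) (h : ∀ y ∈ q.support, y ∈ d.support → y = x) :
    (q.append d).IsPath := by
  rw [Walk.isPath_def, Walk.support_append]
  have hds : d.support = x :: d.support.tail := d.support_eq_cons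
  have hnd : (x :: d.support.tail).Nodup := hds ▸ hd.support_nodup
  refine hq.support_nodup.append (List.nodup_cons.mp hnd).2 ?_
  intro y hyq hyd
  have hyx : y = x := h y hyq (by rw [hds]; exact List.mem_cons_of_mem _ hyd)
  subst hyx
  exact (List.nodup_cons.mp hnd).1 hyd

/-- Median property of trees: the three geodesics spanned by three vertices share a vertex. -/
lemma tree_median (hT : T.IsTree) (a b c : ι) :
    ∃ x, x ∈ (geo hT a b).support ∧ x ∈ (geo hT b c).support ∧ x ∈ (geo hT a c).support := by
  obtain ⟨x, q, r, hxB, hqr, hq⟩ :=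
    exists_first_in_set (geo hT a b) {y | y ∈ (geo hT b c).support}
      ((geo hT b c).start_mem_support)
  have hqP : q.IsPath := by
    have h := geo_isPath hT a b
    rw [← hqr] at h
    exact h.of_append_left
  have hxq : x ∈ (geo hT a b).support := by
    rw [← hqr]
    exact (Walk.mem_support_append_iff _ _).mpr (Or.inl q.end_mem_support)
  have hdP : ((geo hT b c).dropUntil x hxB).IsPath := (geo_isPath hT b c).dropUntil hxB
  have hkey : ∀ y ∈ q.support, y ∈ ((geo hT b c).dropUntil x hxB).support → y = x :=
    fun y hy hyd => hq y hy ((geo hT b c).support_dropUntil_subset hxB hyd)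
  have hwP : (q.append ((geo hT b c).dropUntil x hxB)).IsPath :=
    isPath_append_of_sep hqP hdP hkey
  have hgeo : q.append ((geo hT b c).dropUntil x hxB) = geo hT a c := path_eq_geo hT _ hwP
  refine ⟨x, hxq, hxB, ?_⟩
  rw [← hgeo]
  exact (Walk.mem_support_append_iff _ _).mpr (Or.inl q.end_mem_support)

lemma three_inter (hT : T.IsTree) {S₁ S₂ S₃ : Set ι}
    (w₁ : WConn T S₁) (w₂ : WConn T S₂) (w₃ : WConn T S₃)
    (h12 : (S₁ ∩ S₂).Nonempty) (h13 : (S₁ ∩ S₃).Nonempty) (h23 : (S₂ ∩ S₃).Nonempty) :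
    (S₁ ∩ S₂ ∩ S₃).Nonempty := by
  obtain ⟨a, ha1, ha2⟩ := h12
  obtain ⟨b, hb1, hb3⟩ := h13
  obtain ⟨c, hc2, hc3⟩ := h23
  obtain ⟨x, hab, hbc, hac⟩ := tree_median hT a b c
  exact ⟨x, ⟨geo_spec hT w₁ ha1 hb1 x hab, geo_spec hT w₂ ha2 hc2 x hac⟩,
    geo_spec hT w₃ hb3 hc3 x hbc⟩

/-- Helly property for walk-connected subsets of a tree. -/
lemma tree_helly (hT : T.IsTree) : (l : List (Set ι)) → (∀ S ∈ l, WConn T S) →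
    (∀ S ∈ l, ∀ S' ∈ l, (S ∩ S').Nonempty) → ∃ x, ∀ S ∈ l, x ∈ S
  | [], _, _ => hT.isConnected.nonempty.elim fun i => ⟨i, by simp⟩
  | [S], _, hp => by
      obtain ⟨x, hx, _⟩ := hp S (by simp) S (by simp)
      exact ⟨x, by simpa using hx⟩
  | S :: S' :: t, hc, hp => by
      have hS : WConn T S := hc S (by simp)
      have hS' : WConn T S' := hc S' (by simp)
      obtain ⟨x, hx⟩ := tree_helly hT ((S ∩ S') :: t)
        (by
          intro R hR
          rcases List.mem_cons.mp hR with rfl | hR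
          · exact wconn_inter hT hS hS'
          · exact hc R (by simp [hR]))
        (by
          intro R hR R' hR'
          have key : ∀ R ∈ t, ((S ∩ S') ∩ R).Nonempty := by
            intro R hR
            exact three_inter hT hS hS' (hc R (by simp [hR]))
              (hp S (by simp) S' (by simp)) (hp S (by simp) R (by simp [hR]))
              (hp S' (by simp) R (by simp [hR]))
          rcases List.mem_cons.mp hR with rfl | hR
          · rcases List.mem_cons.mp hR' with rfl | hR'
            · simpa using hp S (by simp) S' (by simp)
            · exact key R' hR'
          · rcases List.mem_cons.mp hR' with rfl | hR'
            · rw [Set.inter_comm]; exact key R hR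
            · exact hp R (by simp [hR]) R' (by simp [hR']))
      refine ⟨x, ?_⟩
      intro R hR
      have hhead := hx (S ∩ S') (by simp)
      rcases List.mem_cons.mp hR with rfl | hR
      · exact hhead.1
      rcases List.mem_cons.mp hR with rfl | hR
      · exact hhead.2
      · exact hx R (by simp [hR])
  termination_by l => l.length

end TreeHelly

section BagSets

variable {V : Type*} {G : SimpleGraph V}

/-- The subtree of tree nodes whose bag contains `v`. -/
def bagSet (d : TreeDecomposition G) (v : V) : Set d.ι := {i | v ∈ d.bag i}

/-- The union of the `bagSet`s of the vertices in `E`. -/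
def bagUnion (d : TreeDecomposition G) (E : Set V) : Set d.ι :=
  {i | ∃ v ∈ E, v ∈ d.bag i}

lemma wconn_of_induce_connected {S : Set V} (h : (G.induce S).Connected) : WConn G S := by
  intro a ha b hb
  obtain ⟨w⟩ := h.preconnected ⟨a, ha⟩ ⟨b, hb⟩
  refine ⟨w.map (SimpleGraph.Embedding.induce S).toHom, ?_⟩
  intro y hy
  replace hy : y ∈ (w.map (SimpleGraph.Embedding.induce S).toHom).support := hy
  rw [Walk.support_map] at hy
  obtain ⟨z, _, rfl⟩ := List.mem_map.mp hy
  exact z.prop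

lemma wconn_bagSet (d : TreeDecomposition G) (v : V) : WConn d.T (bagSet d v) :=
  wconn_of_induce_connected (d.coherent v)

lemma wconn_bagUnion_clique (d : TreeDecomposition G) (E : Set V)
    (hcl : ∀ u ∈ E, ∀ v ∈ E, u ≠ v → G.Adj u v) : WConn d.T (bagUnion d E) := by
  intro i hi j hj
  obtain ⟨u, huE, hu⟩ := hi
  obtain ⟨v, hvE, hv⟩ := hj
  by_cases huv : u = v
  · subst huv
    obtain ⟨p, hp⟩ := wconn_bagSet d u i hu j hv
    exact ⟨p, fun y hy => ⟨u, huE, hp y hy⟩⟩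
  · obtain ⟨κ, hκu, hκv⟩ := d.edge_cover u v (hcl u huE v hvE huv)
    obtain ⟨p, hp⟩ := wconn_bagSet d u i hu κ hκu
    obtain ⟨q, hq⟩ := wconn_bagSet d v κ hκv j hv
    refine ⟨p.append q, ?_⟩
    intro y hy
    rcases (Walk.mem_support_append_iff _ _).mp hy with hy | hy
    · exact ⟨u, huE, hp y hy⟩
    · exact ⟨v, hvE, hq y hy⟩

end BagSets

/-- Every finite graph has some tree decomposition (a single bag). -/
lemma exists_trivial_td {V : Type*} [Fintype V] (G : SimpleGraph V) :
    ∃ w, ∃ d : TreeDecomposition G, d.HasWidthAtMost w := by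
  refine ⟨Fintype.card V,
    { ι := Unit
      T := ⊥
      isTree := ⟨(connected_iff _).mpr ⟨fun a b => Subsingleton.elim a b ▸ Reachable.refl a, ⟨()⟩⟩, isAcyclic_bot⟩
      bag := fun _ => Set.univ
      bag_finite := fun _ => Set.finite_univ
      vert_cover := fun v => ⟨(), Set.mem_univ v⟩
      edge_cover := fun u v _ => ⟨(), Set.mem_univ u, Set.mem_univ v⟩
      coherent := fun v => (connected_iff _).mpr
        ⟨fun a b => Subsingleton.elim a b ▸ Reachable.refl a, ⟨⟨(), Set.mem_univ v⟩⟩⟩ }, ?_⟩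
  intro i
  simp only [Set.ncard_univ, Nat.card_eq_fintype_card]
  omega

theorem treewidth_boxProd_complete_lower_bound (m n : ℕ) (hm : 0 < m) (hn : Odd n) :
    m * (n + 1) / 2 - 1 ≤
      treewidth ((⊤ : SimpleGraph (Fin m)) □ (⊤ : SimpleGraph (Fin n))) := by
  classical
  obtain ⟨k, hk⟩ := hn
  set K := k + 1 with hKdef
  obtain ⟨w₀, d₀, h₀⟩ := exists_trivial_td ((⊤ : SimpleGraph (Fin m)) □ (⊤ : SimpleGraph (Fin n)))
  refine le_csInf ⟨w₀, d₀, h₀⟩ ?_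
  rintro w ⟨d, hd⟩
  haveI : DecidableEq d.ι := Classical.decEq _
  -- the bramble: all K-subsets of rows
  set idx : Finset (Fin m × Finset (Fin n)) :=
    Finset.univ.filter (fun p => p.2.card = K) with hidx
  set E : Fin m × Finset (Fin n) → Set (Fin m × Fin n) :=
    fun p => {v | v.1 = p.1 ∧ v.2 ∈ p.2} with hE
  set l : List (Set d.ι) := idx.toList.map (fun p => bagUnion d (E p)) with hl
  have hcl : ∀ p, ∀ u ∈ E p, ∀ v ∈ E p, u ≠ v →
      ((⊤ : SimpleGraph (Fin m)) □ (⊤ : SimpleGraph (Fin n))).Adj u v := by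
    intro p u hu v hv huv
    have h1 : u.1 = v.1 := hu.1.trans hv.1.symm
    have h2 : u.2 ≠ v.2 := fun h => huv (Prod.ext h1 h)
    exact SimpleGraph.boxProd_adj.mpr (Or.inr ⟨by simpa using h2, h1⟩)
  have hWC : ∀ S ∈ l, WConn d.T S := by
    intro S hS
    obtain ⟨p, _, rfl⟩ := List.mem_map.mp hS
    exact wconn_bagUnion_clique d (E p) (hcl p)
  have hpair : ∀ S ∈ l, ∀ S' ∈ l, (S ∩ S').Nonempty := by
    intro S hS S' hS'
    obtain ⟨p, hp, rfl⟩ := List.mem_map.mp hS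
    obtain ⟨p', hp', rfl⟩ := List.mem_map.mp hS'
    rw [Finset.mem_toList, hidx, Finset.mem_filter] at hp hp'
    have hcard : p.2.card = K := hp.2
    have hcard' : p'.2.card = K := hp'.2
    have key : ∃ u v, u ∈ E p ∧ v ∈ E p' ∧
        (u = v ∨ ((⊤ : SimpleGraph (Fin m)) □ (⊤ : SimpleGraph (Fin n))).Adj u v) := by
      by_cases hr : p.1 = p'.1
      · by_cases hcc : (p.2 ∩ p'.2).Nonempty
        · obtain ⟨c, hc⟩ := hcc
          rw [Finset.mem_inter] at hc
          exact ⟨(p.1, c), (p.1, c), ⟨rfl, hc.1⟩, ⟨hr, hc.2⟩, Or.inl rfl⟩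
        · obtain ⟨c, hc⟩ := Finset.card_pos.mp (by omega : 0 < p.2.card)
          obtain ⟨c', hc'⟩ := Finset.card_pos.mp (by omega : 0 < p'.2.card)
          have hne : c ≠ c' := fun h =>
            hcc ⟨c, Finset.mem_inter.mpr ⟨hc, h ▸ hc'⟩⟩
          refine ⟨(p.1, c), (p'.1, c'), ⟨rfl, hc⟩, ⟨rfl, hc'⟩, Or.inr ?_⟩
          exact SimpleGraph.boxProd_adj.mpr (Or.inr ⟨by simpa using hne, by simp [hr]⟩)
      · have huni : (p.2 ∪ p'.2).card ≤ n := by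
          simpa using Finset.card_le_univ (p.2 ∪ p'.2)
        have hint : 0 < (p.2 ∩ p'.2).card := by
          have := Finset.card_union_add_card_inter p.2 p'.2
          omega
        obtain ⟨c, hc⟩ := Finset.card_pos.mp hint
        rw [Finset.mem_inter] at hc
        refine ⟨(p.1, c), (p'.1, c), ⟨rfl, hc.1⟩, ⟨rfl, hc.2⟩, Or.inr ?_⟩
        exact SimpleGraph.boxProd_adj.mpr (Or.inl ⟨by simpa using hr, rfl⟩)
    obtain ⟨u, v, huE, hvE, huv⟩ := key
    rcases huv with rfl | hadj
    · obtain ⟨i, hi⟩ := d.vert_cover u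
      exact ⟨i, ⟨u, huE, hi⟩, ⟨u, hvE, hi⟩⟩
    · obtain ⟨i, hiu, hiv⟩ := d.edge_cover u v hadj
      exact ⟨i, ⟨u, huE, hiu⟩, ⟨v, hvE, hiv⟩⟩
  obtain ⟨x, hx⟩ := tree_helly d.isTree l hWC hpair
  have hrow : ∀ r : Fin m, ∀ C : Finset (Fin n), C.card = K → ∃ c ∈ C, (r, c) ∈ d.bag x := by
    intro r C hC
    have hmem : bagUnion d (E (r, C)) ∈ l :=
      List.mem_map.mpr ⟨(r, C), Finset.mem_toList.mpr (by simp [hidx, hC]), rfl⟩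
    obtain ⟨v, hvE, hvbag⟩ := hx _ hmem
    obtain ⟨v1, v2⟩ := v
    obtain ⟨hv1, hv2⟩ := hvE
    simp only at hv1 hv2
    subst hv1
    exact ⟨v2, hv2, hvbag⟩
  -- counting
  set B := (d.bag_finite x).toFinset with hB
  have hrowcount : ∀ r : Fin m, K ≤ (B.filter (fun v => v.1 = r)).card := by
    intro r
    set RowC : Finset (Fin n) := Finset.univ.filter (fun c => (r, c) ∈ d.bag x) with hRowC
    have h1 : K ≤ RowC.card := by
      by_contra hlt
      push_neg at hlt
      have hcompl : K ≤ RowCᶜ.card := by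
        rw [Finset.card_compl]
        have : RowC.card ≤ Fintype.card (Fin n) := Finset.card_le_univ _
        simp only [Fintype.card_fin]
        omega
      obtain ⟨C, hCsub, hCcard⟩ := Finset.exists_subset_card_eq hcompl
      obtain ⟨c, hcC, hcbag⟩ := hrow r C hCcard
      have hmemc : c ∈ RowCᶜ := hCsub hcC
      rw [Finset.mem_compl, hRowC, Finset.mem_filter] at hmemc
      exact hmemc ⟨Finset.mem_univ c, hcbag⟩
    refine le_trans h1 (Finset.card_le_card_of_injOn (fun c => (r, c)) ?_ ?_)
    · intro c hc
      simp only [Finset.mem_coe, hRowC, Finset.mem_filter] at hc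
      rw [Finset.mem_coe, Finset.mem_filter, hB, Set.Finite.mem_toFinset]
      exact ⟨hc.2, rfl⟩
    · intro c _ c' _ h
      exact congrArg Prod.snd h
  have hsum : B.card = ∑ r : Fin m, (B.filter (fun v => v.1 = r)).card :=
    Finset.card_eq_sum_card_fiberwise (fun v _ => Finset.mem_univ v.1)
  have hmK : m * K ≤ B.card := by
    rw [hsum]
    calc m * K = ∑ _r : Fin m, K := by simp [Finset.sum_const, mul_comm]
    _ ≤ _ := Finset.sum_le_sum (fun r _ => hrowcount r)
  have hwb : (d.bag x).ncard ≤ w + 1 := hd x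
  have hBn : (d.bag x).ncard = B.card := Set.ncard_eq_toFinset_card _ (d.bag_finite x)
  obtain ⟨M, hM⟩ : ∃ M, m * K = M := ⟨_, rfl⟩
  obtain ⟨P, hP⟩ : ∃ P, m * (n + 1) = P := ⟨_, rfl⟩
  have h2 : P = 2 * M := by rw [← hP, ← hM, hk, hKdef]; ring
  rw [hM] at hmK
  rw [hP]
  omega
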